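/- On ℝ², let ∇ be the standard flat connection and let ∇̃ be defined by Γ̃ᵢⱼᵏ = δᵢᵏ ωⱼ + δⱼᵏ ωᵢ with ω = x² dx¹ (i.e. ω₁ = x², ω₂ = 0). Then the space of germs at any point of solutions of H_∇̃ f = -f ρ_{s,∇̃} is zero, whereas for the flat connection ∇ the solution space of H_∇ f = -f ρ_{s,∇} = 0 is 3-dimensional (spanned by 1, x¹, x²). Hence projective equivalence by a non-closed 1-form need not preserve dim E(·, -1, ∇). -/

import Mathlib

/-- Partial derivative in the `i`-th coordinate direction. -/
noncomputable def pd {n : ℕ} (i : Fin n) (f : (Fin n → ℝ) → ℝ) : (Fin n → ℝ) → ℝ :=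
  fun x => fderiv ℝ f x (Pi.single i 1)

/-- Affine Hessian: `(H_∇ f)ᵢⱼ = ∂ᵢ∂ⱼ f - Γᵢⱼᵏ ∂ₖ f`. -/
noncomputable def affHess {n : ℕ} (Γ : Fin n → Fin n → Fin n → (Fin n → ℝ) → ℝ)
    (f : (Fin n → ℝ) → ℝ) (i j : Fin n) : (Fin n → ℝ) → ℝ :=
  fun x => pd i (pd j f) x - ∑ k, Γ i j k x * pd k f x

/-- Coordinate Ricci tensor
`ρⱼₖ = ∂ᵢΓⱼₖⁱ - ∂ⱼΓᵢₖⁱ + ΓᵢₗⁱΓⱼₖˡ - ΓⱼₗⁱΓᵢₖˡ` (sums over `i`, `l`). -/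
noncomputable def ricci {n : ℕ} (Γ : Fin n → Fin n → Fin n → (Fin n → ℝ) → ℝ)
    (j k : Fin n) : (Fin n → ℝ) → ℝ :=
  fun x => ∑ i, (pd i (Γ j k i) x - pd j (Γ i k i) x
    + ∑ l, (Γ i l i x * Γ j k l x - Γ j l i x * Γ i k l x))

/-- Symmetrized Ricci tensor. -/
noncomputable def ricciS {n : ℕ} (Γ : Fin n → Fin n → Fin n → (Fin n → ℝ) → ℝ)
    (j k : Fin n) : (Fin n → ℝ) → ℝ :=
  fun x => (ricci Γ j k x + ricci Γ k j x) / 2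

-- ===== auxiliary lemmas =====

lemma hasDerivAt_update' {n : ℕ} (p : Fin n → ℝ) (i : Fin n) (τ : ℝ) :
    HasDerivAt (fun t => Function.update p i t) (Pi.single i 1) τ := by
  have h : (fun t : ℝ => Function.update p i t)
      = fun t => p + (t - p i) • (Pi.single i 1 : Fin n → ℝ) := by
    funext t; funext k
    by_cases hk : k = i
    · subst hk; simp
    · simp [Function.update_apply, hk, Pi.single_apply, Ne.symm hk]
  rw [h]
  have := (((hasDerivAt_id τ).sub_const (p i)).smul_const (Pi.single i (1:ℝ))).const_add p
  simpa using this

lemma hasDerivAt_slice {n : ℕ} {g : (Fin n → ℝ) → ℝ} {p : Fin n → ℝ} {i : Fin n} {τ : ℝ}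
    (hg : DifferentiableAt ℝ g (Function.update p i τ)) :
    HasDerivAt (fun t => g (Function.update p i t)) (pd i g (Function.update p i τ)) τ :=
  hg.hasFDerivAt.comp_hasDerivAt τ (hasDerivAt_update' p i τ)

lemma eq_of_hasDerivAt_zero {φ : ℝ → ℝ} {a b : ℝ}
    (h : ∀ t ∈ Set.uIcc a b, HasDerivAt φ 0 t) : φ b = φ a := by
  rcases le_total a b with hab | hab
  · have := constant_of_has_deriv_right_zero (f := φ) (a := a) (b := b)
      (fun x hx => (h x (by rwa [Set.uIcc_of_le hab])).continuousAt.continuousWithinAt)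
      (fun x hx => ((h x (by rw [Set.uIcc_of_le hab]; exact Set.Ico_subset_Icc_self hx)).hasDerivWithinAt))
    exact this b ⟨hab, le_rfl⟩
  · have := constant_of_has_deriv_right_zero (f := φ) (a := b) (b := a)
      (fun x hx => (h x (by rwa [Set.uIcc_of_ge hab])).continuousAt.continuousWithinAt)
      (fun x hx => ((h x (by rw [Set.uIcc_of_ge hab]; exact Set.Ico_subset_Icc_self hx)).hasDerivWithinAt))
    exact (this a ⟨hab, le_rfl⟩).symm

lemma pd_diff {f : (Fin 2 → ℝ) → ℝ} (hf : ContDiff ℝ 2 f) (j : Fin 2) :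
    Differentiable ℝ (pd j f) := by
  have h1 : ContDiff ℝ 1 (fun x => fderiv ℝ f x (Pi.single j 1)) :=
    (hf.fderiv_right (by norm_num)).clm_apply contDiff_const
  exact h1.differentiable (by norm_num)

lemma uIcc_abs_lt {t a c ε : ℝ} (ht : t ∈ Set.uIcc a c) (ha : |a - c| < ε) (hε : 0 < ε) :
    |t - c| < ε := by
  rcases Set.mem_uIcc.mp ht with ⟨h1, h2⟩ | ⟨h1, h2⟩ <;>
    rw [abs_sub_lt_iff] at * <;> constructor <;> linarith

lemma pd_lin (i : Fin 2) (c : ℝ) (x : Fin 2 → ℝ) :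
    pd i (fun y : Fin 2 → ℝ => c * y 1) x = if i = 1 then c else 0 := by
  have h : (fun y : Fin 2 → ℝ => c * y 1)
      = ⇑(c • (ContinuousLinearMap.proj 1 : (Fin 2 → ℝ) →L[ℝ] ℝ)) := rfl
  unfold pd
  rw [h, ContinuousLinearMap.fderiv]
  by_cases hi : i = 1 <;> simp [hi, Pi.single_apply]

lemma basis_decomp (v : Fin 2 → ℝ) :
    v = v 0 • (Pi.single 0 1 : Fin 2 → ℝ) + v 1 • (Pi.single 1 1 : Fin 2 → ℝ) := by
  funext m; fin_cases m <;> simp [Pi.single_apply]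

lemma flat_forward (f : (Fin 2 → ℝ) → ℝ) (hf : ContDiff ℝ 2 f)
    (h : ∀ (x : Fin 2 → ℝ) (i j : Fin 2), pd i (pd j f) x = 0) :
    ∃ a b c : ℝ, f = fun x => a + b * x 0 + c * x 1 := by
  have hfd : Differentiable ℝ f := hf.differentiable (by norm_num)
  have hconst : ∀ j x, pd j f x = pd j f 0 := by
    intro j x
    have hz : ∀ y, fderiv ℝ (pd j f) y = 0 := by
      intro y
      ext v
      have h0 : (fderiv ℝ (pd j f) y) (Pi.single 0 1) = 0 := h y 0 j
      have h1 : (fderiv ℝ (pd j f) y) (Pi.single 1 1) = 0 := h y 1 j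
      conv_lhs => rw [basis_decomp v]
      simp [h0, h1]
    exact is_const_of_fderiv_eq_zero (pd_diff hf j) hz x 0
  have hLd : ∀ x, fderiv ℝ f x = fderiv ℝ f 0 := by
    intro x
    ext v
    have e0 : (fderiv ℝ f x) (Pi.single 0 1) = (fderiv ℝ f 0) (Pi.single 0 1) := hconst 0 x
    have e1 : (fderiv ℝ f x) (Pi.single 1 1) = (fderiv ℝ f 0) (Pi.single 1 1) := hconst 1 x
    conv_lhs => rw [basis_decomp v]
    conv_rhs => rw [basis_decomp v]
    simp [e0, e1]
  set L := fderiv ℝ f 0 with hL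
  have hF : ∀ x, f x - L x = f 0 - L 0 := by
    intro x
    refine is_const_of_fderiv_eq_zero (𝕜 := ℝ) (f := fun y => f y - L y) ?_ ?_ x 0
    · exact hfd.sub L.differentiable
    · intro y
      rw [fderiv_fun_sub (hfd y) (L.differentiableAt)]
      rw [hLd y, L.fderiv]
      simp
  refine ⟨f 0, L (Pi.single 0 1), L (Pi.single 1 1), ?_⟩
  funext x
  have hx := hF x
  have hLx : L x = x 0 * L (Pi.single 0 1) + x 1 * L (Pi.single 1 1) := by
    conv_lhs => rw [basis_decomp x]
    simp
  have hL0 : L 0 = 0 := L.map_zero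
  rw [hL0] at hx
  linarith [hx, hLx]

lemma pd_affine (i : Fin 2) (a b c : ℝ) (x : Fin 2 → ℝ) :
    pd i (fun y : Fin 2 → ℝ => a + b * y 0 + c * y 1) x
      = b * (Pi.single i 1 : Fin 2 → ℝ) 0 + c * (Pi.single i 1 : Fin 2 → ℝ) 1 := by
  set M := b • (ContinuousLinearMap.proj 0 : (Fin 2 → ℝ) →L[ℝ] ℝ)
      + c • (ContinuousLinearMap.proj 1 : (Fin 2 → ℝ) →L[ℝ] ℝ) with hM
  have hfun : (fun y : Fin 2 → ℝ => a + b * y 0 + c * y 1) = fun y => a + M y := by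
    funext y; simp [hM]; ring
  unfold pd
  rw [hfun]
  rw [(M.hasFDerivAt.const_add a).fderiv]
  simp [hM]

lemma flat_backward (a b c : ℝ) (x : Fin 2 → ℝ) (i j : Fin 2) :
    pd i (pd j (fun y : Fin 2 → ℝ => a + b * y 0 + c * y 1)) x = 0 := by
  have hpdj : pd j (fun y : Fin 2 → ℝ => a + b * y 0 + c * y 1)
      = fun _ => b * (Pi.single j 1 : Fin 2 → ℝ) 0 + c * (Pi.single j 1 : Fin 2 → ℝ) 1 := by
    funext y; exact pd_affine j a b c y
  rw [hpdj]
  unfold pd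
  rw [fderiv_fun_const]
  simp

lemma mem_char {P : Fin 2 → ℝ} {ε : ℝ} (x : Fin 2 → ℝ) (hε : 0 < ε) :
    dist x P < ε ↔ |x 0 - P 0| < ε ∧ |x 1 - P 1| < ε := by
  rw [dist_pi_lt_iff hε]
  constructor
  · intro h; exact ⟨by simpa [Real.dist_eq] using h 0, by simpa [Real.dist_eq] using h 1⟩
  · rintro ⟨h0, h1⟩ b; fin_cases b <;> simpa [Real.dist_eq]
/-- main analytic lemma -/
lemma germ_zero {P : Fin 2 → ℝ} {ε : ℝ} {f : (Fin 2 → ℝ) → ℝ} (hε : 0 < ε) (hf : ContDiff ℝ 2 f)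
    (hC : ∀ x, dist x P < ε → pd 1 (pd 1 f) x = 0)
    (hB : ∀ x, dist x P < ε → pd 0 (pd 1 f) x - x 1 * pd 1 f x = f x / 2) :
    ∀ x, dist x P < ε → f x = 0 := by
  have hfd : Differentiable ℝ f := hf.differentiable (by norm_num)
  have hgd : Differentiable ℝ (pd 1 f) := pd_diff hf 1
  -- vertical constancy for differentiable g with vanishing y-derivative on the ball
  have vert : ∀ g : (Fin 2 → ℝ) → ℝ, Differentiable ℝ g →
      (∀ x, dist x P < ε → pd 1 g x = 0) →
      ∀ a, dist a P < ε → g a = g (Function.update a 1 (P 1)) := by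
    intro g hg hg0 a ha
    obtain ⟨ha0, ha1⟩ := (mem_char a hε).mp ha
    have key : g (Function.update a 1 (a 1)) = g (Function.update a 1 (P 1)) := by
      refine eq_of_hasDerivAt_zero (φ := fun t => g (Function.update a 1 t))
        (a := P 1) (b := a 1) ?_
      intro t ht
      have htε : |t - P 1| < ε := by
        rw [Set.uIcc_comm] at ht
        exact uIcc_abs_lt ht ha1 hε
      have hmem : dist (Function.update a 1 t) P < ε := by
        rw [mem_char _ hε]
        constructor
        · simpa [Function.update_apply] using ha0
        · simpa using htε
      have := hasDerivAt_slice (g := g) (p := a) (i := 1) (τ := t) (hg _)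
      rw [hg0 _ hmem] at this
      exact this
    simpa using key
  -- pd 1 f vanishes on the ball
  have hW : ∀ a, dist a P < ε → pd 1 f a = 0 := by
    -- first: pd 1 f a = pd 1 f (update a 1 (P 1)) =: W(a)
    have hWconst : ∀ a, dist a P < ε →
        pd 1 f a = pd 1 f (Function.update a 1 (P 1)) :=
      vert (pd 1 f) hgd hC
    -- f is affine along vertical lines
    have faff : ∀ a, dist a P < ε → ∀ t, |t - P 1| < ε →
        f (Function.update a 1 t) = f (Function.update a 1 (P 1))
          + (t - P 1) * pd 1 f (Function.update a 1 (P 1)) := by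
      intro a ha t htε
      obtain ⟨ha0, ha1⟩ := (mem_char a hε).mp ha
      set W := pd 1 f (Function.update a 1 (P 1)) with hWdef
      have key : f (Function.update a 1 t) - t * W
          = f (Function.update a 1 (P 1)) - P 1 * W := by
        refine eq_of_hasDerivAt_zero (φ := fun τ => f (Function.update a 1 τ) - τ * W)
          (a := P 1) (b := t) ?_
        intro τ hτ
        have hτε : |τ - P 1| < ε := by
          rw [Set.uIcc_comm] at hτ
          exact uIcc_abs_lt hτ htε hε
        have hmem : dist (Function.update a 1 τ) P < ε := by
          rw [mem_char _ hε]
          exact ⟨by simpa [Function.update_apply] using ha0, by simpa using hτε⟩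
        have h1 := hasDerivAt_slice (g := f) (p := a) (i := 1) (τ := τ) (hfd _)
        have h2 : pd 1 f (Function.update a 1 τ) = W := by
          rw [hWconst _ hmem, Function.update_idem]
        rw [h2] at h1
        have h3 : HasDerivAt (fun τ => f (Function.update a 1 τ) - τ * W) (W - 1 * W) τ :=
          h1.sub ((hasDerivAt_id τ).mul_const W)
        simpa using h3
      linear_combination key
    -- pd 0 (pd 1 f) is also constant along verticals
    have horiz : ∀ a, dist a P < ε →
        pd 0 (pd 1 f) a = pd 0 (pd 1 f) (Function.update a 1 (P 1)) := by
      intro a ha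
      obtain ⟨ha0, ha1⟩ := (mem_char a hε).mp ha
      set q := Function.update a 1 (P 1) with hq
      have hq0 : q 0 = a 0 := by simp [hq]
      have hΨ : HasDerivAt (fun σ => pd 1 f (Function.update a 0 σ)) (pd 0 (pd 1 f) a) (a 0) := by
        have := hasDerivAt_slice (g := pd 1 f) (p := a) (i := 0) (τ := a 0) (hgd _)
        simpa [Function.update_eq_self] using this
      have hΨ0 : HasDerivAt (fun σ => pd 1 f (Function.update q 0 σ)) (pd 0 (pd 1 f) q) (a 0) := by
        have := hasDerivAt_slice (g := pd 1 f) (p := q) (i := 0) (τ := a 0) (hgd _)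
        have hqq : Function.update q 0 (a 0) = q := by
          rw [← hq0]; exact Function.update_eq_self 0 q
        rwa [hqq] at this
      have heq : (fun σ => pd 1 f (Function.update a 0 σ))
          =ᶠ[nhds (a 0)] (fun σ => pd 1 f (Function.update q 0 σ)) := by
        have hev : ∀ᶠ σ in nhds (a 0), |σ - P 0| < ε := by
          have hcont : ContinuousAt (fun σ : ℝ => |σ - P 0|) (a 0) :=
            (continuous_abs.comp (continuous_id.sub continuous_const)).continuousAt
          exact hcont.eventually_lt continuousAt_const ha0
        filter_upwards [hev] with σ hσ
        have hmem : dist (Function.update a 0 σ) P < ε := by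
          rw [mem_char _ hε]
          exact ⟨by simpa using hσ, by simpa [Function.update_apply] using ha1⟩
        have h1 := hWconst _ hmem
        have h2 : Function.update (Function.update a 0 σ) 1 (P 1)
            = Function.update q 0 σ := by
          rw [hq]; exact Function.update_comm (show (0:Fin 2) ≠ 1 by decide) σ (P 1) a
        rw [h1, h2]
      have hΨ' : HasDerivAt (fun σ => pd 1 f (Function.update a 0 σ)) (pd 0 (pd 1 f) q) (a 0) :=
        hΨ0.congr_of_eventuallyEq heq
      exact hΨ.unique hΨ'
    -- now derive W = 0
    have hWzero : ∀ a, dist a P < ε → pd 1 f (Function.update a 1 (P 1)) = 0 := by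
      intro a ha
      obtain ⟨ha0, ha1⟩ := (mem_char a hε).mp ha
      set q := Function.update a 1 (P 1) with hq
      have hqmem : dist q P < ε := by
        rw [mem_char _ hε]
        exact ⟨by simpa [hq, Function.update_apply] using ha0, by simpa [hq] using hε⟩
      set W := pd 1 f q with hWdef
      set G := pd 0 (pd 1 f) q with hGdef
      set b := Function.update a 1 (P 1 + ε/2) with hb
      have hbmem : dist b P < ε := by
        rw [mem_char _ hε]
        constructor
        · simpa [hb, Function.update_apply] using ha0
        · simp only [hb, Function.update_self]
          rw [show P 1 + ε/2 - P 1 = ε/2 by ring, abs_of_pos (by linarith)]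
          linarith
      -- equation at q
      have e1 : G - P 1 * W = f q / 2 := by
        have := hB q hqmem
        have hq1 : q 1 = P 1 := by simp [hq]
        rw [hq1] at this
        exact this
      -- equation at b
      have e2 : G - (P 1 + ε/2) * W = (f q + (ε/2) * W) / 2 := by
        have heq := hB b hbmem
        have hb1 : b 1 = P 1 + ε/2 := by simp [hb]
        have hGb : pd 0 (pd 1 f) b = G := by
          rw [hGdef, hq]
          have := horiz b hbmem
          rwa [hb, Function.update_idem] at this
        have hWb : pd 1 f b = W := by
          rw [hWdef, hq]
          have := hWconst b hbmem
          rwa [hb, Function.update_idem] at this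
        have hfb : f b = f q + (ε/2) * W := by
          have := faff a ha (P 1 + ε/2)
            (by rw [show P 1 + ε/2 - P 1 = ε/2 by ring, abs_of_pos (by linarith)]; linarith)
          rw [← hb, ← hq, ← hWdef] at this
          rw [this]; ring
        rw [hb1, hGb, hWb, hfb] at heq
        exact heq
      have h3 : ε * W = 0 := by linear_combination (4/3) * e1 - (4/3) * e2
      rcases mul_eq_zero.mp h3 with h | h
      · exact absurd h (ne_of_gt hε)
      · exact h
    intro a ha
    rw [hWconst a ha, hWzero a ha]
  -- pd 0 (pd 1 f) vanishes on the ball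
  have hG : ∀ a, dist a P < ε → pd 0 (pd 1 f) a = 0 := by
    intro a ha
    have hev : pd 1 f =ᶠ[nhds a] (fun _ => (0:ℝ)) := by
      filter_upwards [Metric.isOpen_ball.mem_nhds (by simpa [Metric.mem_ball] using ha)] with
        x hx
      exact hW x (by simpa [Metric.mem_ball] using hx)
    have h1 : fderiv ℝ (pd 1 f) a = fderiv ℝ (fun _ => (0:ℝ)) a := hev.fderiv_eq
    have h2 : pd 0 (pd 1 f) a = fderiv ℝ (pd 1 f) a (Pi.single 0 1) := rfl
    rw [h2, h1, fderiv_fun_const]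
    simp
  intro x hx
  have := hB x hx
  rw [hG x hx, hW x hx] at this
  simp at this
  linarith


set_option maxHeartbeats 1000000

/-- for the projective (non-strong) deformation of the flat connection on ℝ²
by ω = x²dx¹, the germ solution space of H_∇̃ f = -f ρ_{s,∇̃} at every point is zero,
while for the flat connection the solution space of H_∇ f = 0 is Span{1, x¹, x²}. -/
theorem stmt8 (ω : Fin 2 → (Fin 2 → ℝ) → ℝ)
    (hω : ω = fun i x => if i = 0 then x 1 else 0)
    (Γt : Fin 2 → Fin 2 → Fin 2 → (Fin 2 → ℝ) → ℝ)
    (hΓt : Γt = fun i j k x =>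
      (if i = k then 1 else 0) * ω j x + (if j = k then 1 else 0) * ω i x) :
    (∀ (P : Fin 2 → ℝ) (f : (Fin 2 → ℝ) → ℝ), ContDiff ℝ 2 f →
        (∀ᶠ x in nhds P, ∀ i j : Fin 2, affHess Γt f i j x = -(f x) * ricciS Γt i j x) →
        ∀ᶠ x in nhds P, f x = 0)
    ∧ (∀ f : (Fin 2 → ℝ) → ℝ, ContDiff ℝ 2 f →
        ((∀ (x : Fin 2 → ℝ) (i j : Fin 2),
            affHess (fun _ _ _ _ => (0 : ℝ)) f i j x = 0)
          ↔ ∃ a b c : ℝ, f = fun x => a + b * x 0 + c * x 1)) := by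
  constructor
  · -- projectively deformed connection: only the zero germ
    intro P f hf hyp
    -- component computations
    have Γcomp : ∀ i j k : Fin 2, Γt i j k = fun y =>
        ((if i = k then 1 else 0) * (if j = 0 then 1 else 0)
          + (if j = k then 1 else 0) * (if i = 0 then 1 else 0) : ℝ) * y 1 := by
      subst hΓt hω
      intro i j k
      fin_cases i <;> fin_cases j <;> fin_cases k <;> funext y <;> norm_num <;> ring
    have ricciS11 : ∀ x : Fin 2 → ℝ, ricciS Γt 1 1 x = 0 := by
      intro x
      unfold ricciS ricci
      simp only [Fin.sum_univ_two, Γcomp, pd_lin]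
      norm_num
    have ricciS01 : ∀ x : Fin 2 → ℝ, ricciS Γt 0 1 x = -(1/2) := by
      intro x
      unfold ricciS ricci
      simp only [Fin.sum_univ_two, Γcomp, pd_lin]
      norm_num
    have hess11 : ∀ x : Fin 2 → ℝ, affHess Γt f 1 1 x = pd 1 (pd 1 f) x := by
      intro x
      unfold affHess
      simp only [Fin.sum_univ_two, Γcomp]
      norm_num
    have hess01 : ∀ x : Fin 2 → ℝ,
        affHess Γt f 0 1 x = pd 0 (pd 1 f) x - x 1 * pd 1 f x := by
      intro x
      unfold affHess
      simp only [Fin.sum_univ_two, Γcomp]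
      norm_num
    rw [Metric.eventually_nhds_iff] at hyp
    obtain ⟨ε, hε, hyp⟩ := hyp
    have hC : ∀ x, dist x P < ε → pd 1 (pd 1 f) x = 0 := by
      intro x hx
      have := hyp hx 1 1
      rw [hess11 x, ricciS11 x] at this
      simpa using this
    have hB : ∀ x, dist x P < ε → pd 0 (pd 1 f) x - x 1 * pd 1 f x = f x / 2 := by
      intro x hx
      have := hyp hx 0 1
      rw [hess01 x, ricciS01 x] at this
      rw [this]; ring
    rw [Metric.eventually_nhds_iff]
    exact ⟨ε, hε, fun x hx => germ_zero hε hf hC hB x hx⟩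
  · -- flat connection: solutions are exactly the affine functions
    intro f hf
    have hred : ∀ (x : Fin 2 → ℝ) (i j : Fin 2),
        affHess (fun _ _ _ _ => (0 : ℝ)) f i j x = pd i (pd j f) x := by
      intro x i j
      unfold affHess
      simp
    constructor
    · intro h
      exact flat_forward f hf (fun x i j => by rw [← hred x i j]; exact h x i j)
    · rintro ⟨a, b, c, rfl⟩ x i j
      rw [hred x i j]
      exact flat_backward a b c x i j
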